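/- Let d ≥ 1. There is a constant C = C(d) such that the following holds: if K > 0 and m : ℝ^d → ℝ is measurable with |m(x)| ≤ K (1+|x|)^{-d} (1+log(1+|x|))^{-1/2} for all x ∈ ℝ^d, then for every x ∈ ℝ^d the convolution integral (m⋆m)(x) = ∫_{ℝ^d} m(x−y) m(y) dy is absolutely convergent and satisfies |(m⋆m)(x)| ≤ C K² (1+|x|)^{-d}. -/

import Mathlib

open MeasureTheory Set Metric Filter

noncomputable def LL (t : ℝ) : ℝ := 1 + Real.log (1 + t)

lemma one_le_LL {t : ℝ} (ht : 0 ≤ t) : 1 ≤ LL t := by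
  have h : (0:ℝ) ≤ Real.log (1 + t) := Real.log_nonneg (by linarith)
  unfold LL; linarith

lemma LL_pos {t : ℝ} (ht : 0 ≤ t) : 0 < LL t := lt_of_lt_of_le one_pos (one_le_LL ht)

lemma LL_mono {s t : ℝ} (hs : 0 ≤ s) (hst : s ≤ t) : LL s ≤ LL t := by
  unfold LL
  have h : Real.log (1 + s) ≤ Real.log (1 + t) := by
    apply Real.log_le_log (by linarith) (by linarith)
  linarith

/-- the 1-d envelope -/
noncomputable def gg (d : ℕ) (t : ℝ) : ℝ := (1 + t) ^ (-(d:ℝ)) * (LL t) ^ (-(1/2 : ℝ))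

lemma gg_nonneg (d : ℕ) {t : ℝ} (ht : 0 ≤ t) : 0 ≤ gg d t := by
  unfold gg
  have h1 : (0:ℝ) < 1 + t := by linarith
  have h2 := LL_pos ht
  positivity

lemma gg_anti (d : ℕ) {s t : ℝ} (hs : 0 ≤ s) (hst : s ≤ t) : gg d t ≤ gg d s := by
  unfold gg
  have h1 : (0:ℝ) < 1 + s := by linarith
  have h2 := LL_pos hs
  have h3 : (0:ℝ) < LL t := LL_pos (le_trans hs hst)
  apply mul_le_mul
  · exact Real.rpow_le_rpow_of_nonpos h1 (by linarith) (neg_nonpos.mpr (Nat.cast_nonneg d))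
  · exact Real.rpow_le_rpow_of_nonpos h2 (LL_mono hs hst) (by norm_num)
  · positivity
  · positivity

lemma gg_le_pow (d : ℕ) {t : ℝ} (ht : 0 ≤ t) : gg d t ≤ (1 + t) ^ (-(d:ℝ)) := by
  unfold gg
  have h1 : (0:ℝ) < 1 + t := by linarith
  calc (1 + t) ^ (-(d:ℝ)) * (LL t) ^ (-(1/2 : ℝ))
      ≤ (1 + t) ^ (-(d:ℝ)) * 1 := by
        apply mul_le_mul_of_nonneg_left
          (Real.rpow_le_one_of_one_le_of_nonpos (one_le_LL ht) (by norm_num)) (by positivity)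
    _ = (1 + t) ^ (-(d:ℝ)) := mul_one _

lemma hasDerivAt_LLsqrt {r : ℝ} (hr : 0 ≤ r) :
    HasDerivAt (fun t => 2 * (LL t) ^ (1/2 : ℝ)) ((1 + r)⁻¹ * (LL r) ^ (-(1/2 : ℝ))) r := by
  have h1 : (0:ℝ) < 1 + r := by linarith
  have h2 := LL_pos hr
  have hL : HasDerivAt LL ((1 + r)⁻¹) r := by
    have := (Real.hasDerivAt_log h1.ne').comp r ((hasDerivAt_id r).const_add 1)
    show HasDerivAt (fun t => 1 + Real.log (1 + t)) ((1 + r)⁻¹) r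
    simpa [LL] using (this.const_add 1)
  have hp : HasDerivAt (fun y : ℝ => y ^ (1/2 : ℝ)) ((1/2) * (LL r) ^ ((1/2 : ℝ) - 1)) (LL r) :=
    Real.hasDerivAt_rpow_const (Or.inl h2.ne')
  have := (hp.comp r hL).const_mul 2
  refine this.congr_deriv ?_
  have : (1/2 : ℝ) - 1 = -(1/2 : ℝ):= by norm_num
  rw [this]; ring

lemma cont_integrand : ∀ r ∈ Ici (0:ℝ),
    ContinuousWithinAt (fun t : ℝ => (1 + t)⁻¹ * (LL t) ^ (-(1/2 : ℝ))) (Ici 0) r := by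
  intro r hr
  have h1 : (0:ℝ) < 1 + r := by simp at hr; linarith
  have h2 := LL_pos hr
  apply ContinuousAt.continuousWithinAt
  have hLc : ContinuousAt LL r := by
    have := (Real.continuousAt_log h1.ne').comp ((continuousAt_const.add continuousAt_id))
    exact continuousAt_const.add this
  exact ((continuousAt_const.add continuousAt_id).inv₀ h1.ne').mul
    (hLc.rpow_const (Or.inl h2.ne'))

lemma int_oned_near {ρ : ℝ} (hρ : 0 ≤ ρ) :
    ∫ r in Ioc 0 ρ, (1 + r)⁻¹ * (LL r) ^ (-(1/2 : ℝ)) ≤ 2 * (LL ρ) ^ (1/2 : ℝ) := by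
  have hcont : ContinuousOn (fun t : ℝ => (1 + t)⁻¹ * (LL t) ^ (-(1/2 : ℝ))) (Icc 0 ρ) :=
    fun r hr => ((cont_integrand r (mem_Ici.2 hr.1))).mono Icc_subset_Ici_self
  have heq : ∫ r in Ioc 0 ρ, (1 + r)⁻¹ * (LL r) ^ (-(1/2 : ℝ))
      = 2 * (LL ρ) ^ (1/2 : ℝ) - 2 * (LL 0) ^ (1/2 : ℝ) := by
    rw [← intervalIntegral.integral_of_le hρ]
    apply intervalIntegral.integral_eq_sub_of_hasDerivAt
    · intro r hr
      rw [uIcc_of_le hρ] at hr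
      exact hasDerivAt_LLsqrt hr.1
    · apply ContinuousOn.intervalIntegrable
      rwa [uIcc_of_le hρ]
  rw [heq]
  have h0 : LL 0 = 1 := by simp [LL]
  rw [h0, Real.one_rpow]
  have : (0:ℝ) ≤ 2 * (LL ρ) ^ (1/2 : ℝ) := by
    have := LL_pos hρ; positivity
  linarith


lemma far_deriv (d : ℕ) (hd : 1 ≤ d) {r : ℝ} (hr : -1 < r) :
    HasDerivAt (fun t : ℝ => -(1 + t) ^ (-(d:ℝ)) / d) ((1 + r) ^ (-((d:ℝ) + 1))) r := by
  have h1 : (0:ℝ) < 1 + r := by linarith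
  have hd0 : (0:ℝ) < (d:ℝ) := by exact_mod_cast hd
  have hp : HasDerivAt (fun y : ℝ => y ^ (-(d:ℝ))) ((-(d:ℝ)) * (1 + r) ^ (-(d:ℝ) - 1)) (1 + r) :=
    Real.hasDerivAt_rpow_const (Or.inl h1.ne')
  have hb : HasDerivAt (fun t : ℝ => 1 + t) 1 r := (hasDerivAt_id r).const_add 1
  have h := ((hp.comp r hb).neg).div_const (d:ℝ)
  refine h.congr_deriv ?_
  rw [show -(d:ℝ) - 1 = -((d:ℝ)+1) by ring]
  field_simp

lemma far_tendsto (d : ℕ) (hd : 1 ≤ d) :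
    Tendsto (fun t : ℝ => -(1 + t) ^ (-(d:ℝ)) / d) atTop (nhds 0) := by
  have hd0 : (0:ℝ) < (d:ℝ) := by exact_mod_cast hd
  have h1 : Tendsto (fun t : ℝ => (1 + t)) atTop atTop := tendsto_atTop_add_const_left _ 1 tendsto_id
  have h2 : Tendsto (fun t : ℝ => (1 + t) ^ (-(d:ℝ))) atTop (nhds 0) :=
    (tendsto_rpow_neg_atTop hd0).comp h1
  have := (h2.neg).div_const (d:ℝ)
  simpa using this

lemma int_oned_far (d : ℕ) (hd : 1 ≤ d) {ρ : ℝ} (hρ : 0 ≤ ρ) :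
    IntegrableOn (fun r : ℝ => (1 + r) ^ (-((d:ℝ) + 1))) (Ioi ρ) ∧
    ∫ r in Ioi ρ, (1 + r) ^ (-((d:ℝ) + 1)) ≤ (1 + ρ) ^ (-(d:ℝ)) := by
  have hd0 : (0:ℝ) < (d:ℝ) := by exact_mod_cast hd
  have hρ1 : (0:ℝ) < 1 + ρ := by linarith
  have hderiv : ∀ r ∈ Ioi ρ, HasDerivAt (fun t : ℝ => -(1 + t) ^ (-(d:ℝ)) / d)
      ((1 + r) ^ (-((d:ℝ) + 1))) r := fun r hr => far_deriv d hd (by simp at hr; linarith)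
  have hcont : ContinuousWithinAt (fun t : ℝ => -(1 + t) ^ (-(d:ℝ)) / d) (Ici ρ) ρ :=
    ((far_deriv d hd (by linarith)).continuousAt).continuousWithinAt
  have hpos : ∀ r ∈ Ioi ρ, 0 ≤ (1 + r) ^ (-((d:ℝ) + 1)) := by
    intro r hr
    have : (0:ℝ) < 1 + r := by simp at hr; linarith
    positivity
  have hint : IntegrableOn (fun r : ℝ => (1 + r) ^ (-((d:ℝ) + 1))) (Ioi ρ) :=
    integrableOn_Ioi_deriv_of_nonneg hcont hderiv hpos (far_tendsto d hd)
  refine ⟨hint, ?_⟩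
  rw [integral_Ioi_of_hasDerivAt_of_tendsto hcont hderiv hint (far_tendsto d hd)]
  have hval : (0:ℝ) - (-(1 + ρ) ^ (-(d:ℝ)) / d) = (1 + ρ) ^ (-(d:ℝ)) / d := by ring
  rw [hval]
  apply div_le_self (by positivity)
  exact_mod_cast hd

lemma gg_contAt (d : ℕ) {t : ℝ} (ht : 0 ≤ t) : ContinuousAt (gg d) t := by
  have h1 : (0:ℝ) < 1 + t := by linarith
  have h2 := LL_pos ht
  have hLc : ContinuousAt LL t := by
    have := (Real.continuousAt_log h1.ne').comp ((continuousAt_const.add continuousAt_id))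
    exact continuousAt_const.add this
  exact ((continuousAt_const.add continuousAt_id).rpow_const (Or.inl h1.ne')).mul
    (hLc.rpow_const (Or.inl h2.ne'))

lemma radial_eq (d : ℕ) (hd : 1 ≤ d) (F : ℝ → ℝ) :
    ∫ y : EuclideanSpace ℝ (Fin d), F ‖y‖
      = ((d:ℝ) * (volume (ball (0:EuclideanSpace ℝ (Fin d)) 1)).toReal)
          * ∫ r in Ioi (0:ℝ), r ^ (d - 1) * F r := by
  haveI : Nontrivial (EuclideanSpace ℝ (Fin d)) := by
    apply Module.nontrivial_of_finrank_pos (R := ℝ)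
    rw [finrank_euclideanSpace_fin]; omega
  have h := MeasureTheory.integral_fun_norm_addHaar (volume : Measure (EuclideanSpace ℝ (Fin d))) F
  simp only [finrank_euclideanSpace_fin, nsmul_eq_mul, smul_eq_mul] at h
  rw [h, measureReal_def]; ring

lemma radial_near (d : ℕ) (hd : 1 ≤ d) {ρ : ℝ} (hρ : 0 ≤ ρ) :
    ∫ y in closedBall (0:EuclideanSpace ℝ (Fin d)) ρ, gg d ‖y‖
      ≤ ((d:ℝ) * (volume (ball (0:EuclideanSpace ℝ (Fin d)) 1)).toReal)
          * (2 * (LL ρ) ^ (1/2 : ℝ)) := by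
  have hind : ∫ y in closedBall (0:EuclideanSpace ℝ (Fin d)) ρ, gg d ‖y‖
      = ∫ y : EuclideanSpace ℝ (Fin d), (Iic ρ).indicator (gg d) ‖y‖ := by
    rw [← integral_indicator (measurableSet_closedBall)]
    congr 1; funext y
    by_cases h : ‖y‖ ≤ ρ <;>
      simp [Set.indicator, mem_closedBall_zero_iff, h]
  rw [hind, radial_eq d hd]
  have hin : ∫ r in Ioi (0:ℝ), r ^ (d - 1) * (Iic ρ).indicator (gg d) r
      = ∫ r in Ioc (0:ℝ) ρ, r ^ (d - 1) * gg d r := by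
    have hswap : ∀ r : ℝ, r ^ (d - 1) * (Iic ρ).indicator (gg d) r
        = (Iic ρ).indicator (fun r => r ^ (d - 1) * gg d r) r := by
      intro r; by_cases h : r ∈ Iic ρ <;> simp [h]
    simp_rw [hswap]
    rw [integral_indicator measurableSet_Iic, Measure.restrict_restrict measurableSet_Iic,
      inter_comm, Ioi_inter_Iic]
  rw [hin]
  have hDpos : (0:ℝ) ≤ (d:ℝ) * (volume (ball (0:EuclideanSpace ℝ (Fin d)) 1)).toReal := by
    positivity
  apply mul_le_mul_of_nonneg_left _ hDpos
  calc ∫ r in Ioc (0:ℝ) ρ, r ^ (d - 1) * gg d r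
      ≤ ∫ r in Ioc (0:ℝ) ρ, (1 + r)⁻¹ * (LL r) ^ (-(1/2 : ℝ)) := by
        apply setIntegral_mono_on
        · apply ((continuousOn_of_forall_continuousAt
            (fun r hr => (continuousAt_pow r (d-1)).mul (gg_contAt d hr.1))).integrableOn_compact
              isCompact_Icc).mono_set Ioc_subset_Icc_self
        · exact ((ContinuousOn.mono (fun r hr => cont_integrand r hr) Icc_subset_Ici_self
            ).integrableOn_compact isCompact_Icc).mono_set Ioc_subset_Icc_self
        · exact measurableSet_Ioc
        · intro r hr
          have hr0 : (0:ℝ) < r := hr.1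
          have h1 : (0:ℝ) < 1 + r := by linarith
          have hq : (0:ℝ) ≤ (LL r) ^ (-(1/2 : ℝ)) := by
            have := LL_pos hr0.le; positivity
          have key : r ^ (d - 1) * (1 + r) ^ (-(d:ℝ)) ≤ (1 + r)⁻¹ := by
            have hcast : (1 + r) ^ (-(d:ℝ)) = ((1 + r) ^ (d:ℕ))⁻¹ := by
              rw [← Real.rpow_natCast (1+r) d, ← Real.rpow_neg h1.le]
            rw [hcast]
            have hd1 : (1+r)^(d:ℕ) = (1+r)^(d-1) * (1+r) := by
              rw [← pow_succ]; congr 1; omega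
            have hpow : r^(d-1) ≤ (1+r)^(d-1) := pow_le_pow_left₀ hr0.le (by linarith) _
            have hstep : r^(d-1) * ((1+r)^(d-1))⁻¹ ≤ 1 := by
              rw [← div_eq_mul_inv, div_le_one (by positivity)]
              exact hpow
            rw [hd1]
            calc r^(d-1) * ((1+r)^(d-1) * (1+r))⁻¹
                = (r^(d-1) * ((1+r)^(d-1))⁻¹) * (1+r)⁻¹ := by rw [mul_inv]; ring
              _ ≤ 1 * (1+r)⁻¹ := mul_le_mul_of_nonneg_right hstep (by positivity)
              _ = (1+r)⁻¹ := one_mul _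
          calc r ^ (d - 1) * gg d r
              = (r ^ (d - 1) * (1 + r) ^ (-(d:ℝ))) * (LL r) ^ (-(1/2 : ℝ)) := by
                unfold gg; ring
            _ ≤ (1 + r)⁻¹ * (LL r) ^ (-(1/2 : ℝ)) := mul_le_mul_of_nonneg_right key hq
    _ ≤ 2 * (LL ρ) ^ (1/2 : ℝ) := int_oned_near hρ

lemma radial_far (d : ℕ) (hd : 1 ≤ d) {ρ : ℝ} (hρ : 0 ≤ ρ) :
    ∫ y in {y : EuclideanSpace ℝ (Fin d) | ρ < ‖y‖}, (1 + ‖y‖) ^ (-(2*(d:ℝ)))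
      ≤ ((d:ℝ) * (volume (ball (0:EuclideanSpace ℝ (Fin d)) 1)).toReal)
          * (1 + ρ) ^ (-(d:ℝ)) := by
  have hsm : MeasurableSet {y : EuclideanSpace ℝ (Fin d) | ρ < ‖y‖} := by
    have : {y : EuclideanSpace ℝ (Fin d) | ρ < ‖y‖} = (closedBall 0 ρ)ᶜ := by
      ext y; simp [mem_closedBall_zero_iff, not_le]
    rw [this]; exact (measurableSet_closedBall).compl
  have hind : ∫ y in {y : EuclideanSpace ℝ (Fin d) | ρ < ‖y‖}, (1 + ‖y‖) ^ (-(2*(d:ℝ)))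
      = ∫ y : EuclideanSpace ℝ (Fin d),
          (Ioi ρ).indicator (fun r => (1 + r) ^ (-(2*(d:ℝ)))) ‖y‖ := by
    rw [← integral_indicator hsm]
    refine integral_congr_ae (ae_of_all _ fun y => ?_)
    by_cases h : ρ < ‖y‖
    · simp [Set.indicator, h]
    · simp [Set.indicator, h]
  rw [hind, radial_eq d hd]
  have hin : ∫ r in Ioi (0:ℝ), r ^ (d - 1) * (Ioi ρ).indicator (fun r => (1 + r) ^ (-(2*(d:ℝ)))) r
      = ∫ r in Ioi ρ, r ^ (d - 1) * (1 + r) ^ (-(2*(d:ℝ))) := by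
    have hswap : ∀ r : ℝ, r ^ (d - 1) * (Ioi ρ).indicator (fun r => (1 + r) ^ (-(2*(d:ℝ)))) r
        = (Ioi ρ).indicator (fun r => r ^ (d - 1) * (1 + r) ^ (-(2*(d:ℝ)))) r := by
      intro r; by_cases h : r ∈ Ioi ρ <;> simp [h]
    simp_rw [hswap]
    rw [integral_indicator measurableSet_Ioi, Measure.restrict_restrict measurableSet_Ioi,
      Ioi_inter_Ioi, max_eq_left hρ]
  rw [hin]
  have hDpos : (0:ℝ) ≤ (d:ℝ) * (volume (ball (0:EuclideanSpace ℝ (Fin d)) 1)).toReal := by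
    positivity
  apply mul_le_mul_of_nonneg_left _ hDpos
  have hpt : ∀ r ∈ Ioi ρ, r ^ (d - 1) * (1 + r) ^ (-(2*(d:ℝ))) ≤ (1 + r) ^ (-((d:ℝ)+1)) := by
    intro r hr
    have hr0 : (0:ℝ) < r := lt_of_le_of_lt hρ hr
    have h1 : (0:ℝ) < 1 + r := by linarith
    calc r ^ (d - 1) * (1 + r) ^ (-(2*(d:ℝ)))
        ≤ (1+r) ^ (d - 1) * (1 + r) ^ (-(2*(d:ℝ))) := by
          apply mul_le_mul_of_nonneg_right (pow_le_pow_left₀ hr0.le (by linarith) _) (by positivity)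
      _ = (1 + r) ^ (-((d:ℝ)+1)) := by
          rw [← Real.rpow_natCast (1+r) (d-1), ← Real.rpow_add h1]
          congr 1
          rw [Nat.cast_sub hd]
          push_cast; ring
  have hptnn : ∀ r ∈ Ioi ρ, (0:ℝ) ≤ r ^ (d - 1) * (1 + r) ^ (-(2*(d:ℝ))) := by
    intro r hr
    have hr0 : (0:ℝ) < r := lt_of_le_of_lt hρ hr
    have h1 : (0:ℝ) < 1 + r := by linarith
    positivity
  have hint2 := (int_oned_far d hd hρ).1
  have hint1 : IntegrableOn (fun r : ℝ => r ^ (d - 1) * (1 + r) ^ (-(2*(d:ℝ)))) (Ioi ρ) := by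
    apply Integrable.mono (f := fun r : ℝ => r ^ (d - 1) * (1 + r) ^ (-(2*(d:ℝ)))) hint2
    · apply Measurable.aestronglyMeasurable
      fun_prop
    · rw [ae_restrict_iff' measurableSet_Ioi]
      apply ae_of_all
      intro r hr
      have h1 : (0:ℝ) < 1 + r := by have := lt_of_le_of_lt hρ hr; linarith
      rw [Real.norm_eq_abs, Real.norm_eq_abs, abs_of_nonneg (hptnn r hr),
        abs_of_nonneg (by positivity)]
      exact hpt r hr
  calc ∫ r in Ioi ρ, r ^ (d - 1) * (1 + r) ^ (-(2*(d:ℝ)))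
      ≤ ∫ r in Ioi ρ, (1 + r) ^ (-((d:ℝ)+1)) :=
        setIntegral_mono_on hint1 hint2 measurableSet_Ioi hpt
    _ ≤ (1 + ρ) ^ (-(d:ℝ)) := (int_oned_far d hd hρ).2

set_option maxHeartbeats 1000000 in
/-- critical case β = d. If
`|m(x)| ≤ K (1+|x|)^{-d} (1+log(1+|x|))^{-1/2}`, then the convolution `m⋆m` is
absolutely convergent at every point and `|(m⋆m)(x)| ≤ C K² (1+|x|)^{-d}`. -/
theorem covariance_decay_critical (d : ℕ) (hd : 1 ≤ d) :
    ∃ C : ℝ, 0 < C ∧ ∀ K : ℝ, 0 < K →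
      ∀ m : EuclideanSpace ℝ (Fin d) → ℝ, Measurable m →
        (∀ x, |m x| ≤ K * (1 + ‖x‖) ^ (-(d : ℝ)) *
          (1 + Real.log (1 + ‖x‖)) ^ (-(1/2 : ℝ))) →
        ∀ x : EuclideanSpace ℝ (Fin d),
          Integrable (fun y => m (x - y) * m y) ∧
          |∫ y, m (x - y) * m y| ≤ C * K ^ 2 * (1 + ‖x‖) ^ (-(d : ℝ)) := by
  set V : ℝ := (volume (ball (0:EuclideanSpace ℝ (Fin d)) 1)).toReal with hVdef
  have hV : 0 < V := by
    rw [hVdef]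
    exact ENNReal.toReal_pos (measure_ball_pos volume 0 one_pos).ne' measure_ball_lt_top.ne
  set D : ℝ := (d:ℝ) * V with hDdef
  have hD : 0 < D := by
    have hd0 : (0:ℝ) < (d:ℝ) := by exact_mod_cast hd
    positivity
  refine ⟨6 * (2:ℝ)^(d:ℝ) * D, by positivity, ?_⟩
  intro K hK m hm hmb x
  set R : ℝ := ‖x‖ with hRdef
  have hR : 0 ≤ R := norm_nonneg x
  have hR2 : (0:ℝ) ≤ R/2 := by linarith
  -- envelope facts
  have hfb : ∀ y : EuclideanSpace ℝ (Fin d), |m y| ≤ K * gg d ‖y‖ := by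
    intro y
    have := hmb y
    unfold gg
    rw [← mul_assoc]
    exact this
  have hfnn : ∀ t : ℝ, 0 ≤ t → 0 ≤ gg d t := fun t ht => gg_nonneg d ht
  have hfcont : Continuous (fun y : EuclideanSpace ℝ (Fin d) => gg d ‖y‖) :=
    continuous_iff_continuousAt.2 fun y =>
      (gg_contAt d (norm_nonneg y)).comp continuous_norm.continuousAt
  -- the transformation T
  have hT : MeasurePreserving (fun y : EuclideanSpace ℝ (Fin d) => x - y) volume volume :=
    Measure.measurePreserving_sub_left volume x
  have hTemb : MeasurableEmbedding (fun y : EuclideanSpace ℝ (Fin d) => x - y) :=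
    (MeasurableEquiv.subLeft x).measurableEmbedding
  have hTmeas : Measurable (fun y : EuclideanSpace ℝ (Fin d) => x - y) := measurable_const.sub measurable_id
  have hTT : ∀ z : EuclideanSpace ℝ (Fin d), x - (x - z) = z := fun z => sub_sub_cancel x z
  -- integrable majorant
  have hnr : (Module.finrank ℝ (EuclideanSpace ℝ (Fin d)) : ℝ) < 2*(d:ℝ) := by
    rw [finrank_euclideanSpace_fin]
    exact_mod_cast (by omega : d < 2*d)
  have hv_int : Integrable (fun y : EuclideanSpace ℝ (Fin d) => (1 + ‖y‖) ^ (-(2*(d:ℝ)))) volume :=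
    integrable_one_add_norm (μ := (volume : Measure (EuclideanSpace ℝ (Fin d)))) hnr
  have hvx_int : Integrable (fun y : EuclideanSpace ℝ (Fin d) => (1 + ‖x - y‖) ^ (-(2*(d:ℝ)))) volume := by
    have := (hT.integrable_comp_emb hTemb).2 hv_int
    exact this
  have hsq : ∀ t : EuclideanSpace ℝ (Fin d), ((1 + ‖t‖) ^ (-(d:ℝ)))^2 = (1 + ‖t‖) ^ (-(2*(d:ℝ))) := by
    intro t
    have h1 : (0:ℝ) < 1 + ‖t‖ := by have := norm_nonneg t; linarith
    rw [pow_two, ← Real.rpow_add h1]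
    congr 1; ring
  have hprod_le_w : ∀ y : EuclideanSpace ℝ (Fin d), gg d ‖x - y‖ * gg d ‖y‖
      ≤ (1 + ‖y‖) ^ (-(2*(d:ℝ))) + (1 + ‖x - y‖) ^ (-(2*(d:ℝ))) := by
    intro y
    set a : ℝ := (1 + ‖x - y‖) ^ (-(d:ℝ)) with ha
    set b : ℝ := (1 + ‖y‖) ^ (-(d:ℝ)) with hb0
    have hna : 0 ≤ a := by rw [ha]; positivity
    have hnb : 0 ≤ b := by rw [hb0]; positivity
    have h1 : gg d ‖x - y‖ * gg d ‖y‖ ≤ a * b :=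
      mul_le_mul (gg_le_pow d (norm_nonneg _)) (gg_le_pow d (norm_nonneg _))
        (hfnn _ (norm_nonneg _)) hna
    have h2 : a * b ≤ b^2 + a^2 := by nlinarith [sq_nonneg (a - b)]
    calc gg d ‖x - y‖ * gg d ‖y‖ ≤ a * b := h1
      _ ≤ b^2 + a^2 := h2
      _ = (1 + ‖y‖) ^ (-(2*(d:ℝ))) + (1 + ‖x - y‖) ^ (-(2*(d:ℝ))) := by
          rw [hsq y, hsq (x - y)]
  have hw_int : Integrable
      (fun y : EuclideanSpace ℝ (Fin d) => (1 + ‖y‖) ^ (-(2*(d:ℝ))) + (1 + ‖x - y‖) ^ (-(2*(d:ℝ)))) volume :=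
    hv_int.add hvx_int
  have hfprod_meas : AEStronglyMeasurable (fun y : EuclideanSpace ℝ (Fin d) => gg d ‖x - y‖ * gg d ‖y‖) volume :=
    ((hfcont.comp (continuous_const.sub continuous_id)).mul hfcont).aestronglyMeasurable
  have hfprodnn : ∀ y : EuclideanSpace ℝ (Fin d), 0 ≤ gg d ‖x - y‖ * gg d ‖y‖ :=
    fun y => mul_nonneg (hfnn _ (norm_nonneg _)) (hfnn _ (norm_nonneg _))
  have hfprod_int : Integrable (fun y : EuclideanSpace ℝ (Fin d) => gg d ‖x - y‖ * gg d ‖y‖) volume := by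
    apply hw_int.mono' hfprod_meas
    apply ae_of_all
    intro y
    rw [Real.norm_eq_abs, abs_of_nonneg (hfprodnn y)]
    exact hprod_le_w y
  have hmprod_meas : AEStronglyMeasurable (fun y : EuclideanSpace ℝ (Fin d) => m (x - y) * m y) volume :=
    ((hm.comp (measurable_const.sub measurable_id)).mul hm).aestronglyMeasurable
  have hmprod_le : ∀ y : EuclideanSpace ℝ (Fin d), |m (x - y) * m y| ≤ K^2 * (gg d ‖x - y‖ * gg d ‖y‖) := by
    intro y
    rw [abs_mul]
    calc |m (x - y)| * |m y| ≤ (K * gg d ‖x - y‖) * (K * gg d ‖y‖) :=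
          mul_le_mul (hfb _) (hfb _) (abs_nonneg _)
            (mul_nonneg hK.le (hfnn _ (norm_nonneg _)))
      _ = K^2 * (gg d ‖x - y‖ * gg d ‖y‖) := by ring
  have hmint : Integrable (fun y : EuclideanSpace ℝ (Fin d) => m (x - y) * m y) volume := by
    apply (hfprod_int.const_mul (K^2)).mono' hmprod_meas
    apply ae_of_all
    intro y
    rw [Real.norm_eq_abs]
    exact hmprod_le y
  refine ⟨hmint, ?_⟩
  -- set decomposition
  set A : Set (EuclideanSpace ℝ (Fin d)) := closedBall (0:EuclideanSpace ℝ (Fin d)) (R/2) with hAdef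
  have hA : MeasurableSet A := measurableSet_closedBall
  set B : Set (EuclideanSpace ℝ (Fin d)) := (fun y : EuclideanSpace ℝ (Fin d) => x - y) ⁻¹' A with hBdef
  have hB : MeasurableSet B := hTmeas hA
  have hTBc : (fun y : EuclideanSpace ℝ (Fin d) => x - y) ⁻¹' Bᶜ = Aᶜ := by
    ext z
    simp only [hBdef, Set.mem_preimage, Set.mem_compl_iff, hTT z]
  have hTpre_sub : (fun y : EuclideanSpace ℝ (Fin d) => x - y) ⁻¹' (Aᶜ ∩ B) ⊆ A := by
    intro z hz
    have h2 := hz.2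
    simp only [hBdef, Set.mem_preimage, hTT z] at h2
    exact h2
  have hAc : Aᶜ = {y : EuclideanSpace ℝ (Fin d) | R/2 < ‖y‖} := by
    ext y; simp [hAdef, mem_closedBall_zero_iff, not_le]
  -- half-radius bound
  have hhalf : (1 + R/2) ^ (-(d:ℝ)) ≤ (2:ℝ)^(d:ℝ) * (1 + R) ^ (-(d:ℝ)) := by
    have h2 : ((1+R)/2) ≤ 1 + R/2 := by linarith
    have hle := Real.rpow_le_rpow_of_nonpos (by positivity : (0:ℝ) < (1+R)/2) h2
      (neg_nonpos.mpr (Nat.cast_nonneg d))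
    have hsplit : ((1+R)/2) ^ (-(d:ℝ)) = (2:ℝ)^(d:ℝ) * (1+R) ^ (-(d:ℝ)) := by
      rw [Real.div_rpow (by linarith) (by norm_num)]
      rw [Real.rpow_neg (by norm_num : (0:ℝ) ≤ 2)]
      rw [div_eq_mul_inv, inv_inv, mul_comm]
    rw [← hsplit]
    exact hle
  -- the near-region bound (both orders of the product)
  have hnear : ∫ y in A, gg d ‖x - y‖ * gg d ‖y‖
      ≤ 2 * D * ((2:ℝ)^(d:ℝ) * (1 + R) ^ (-(d:ℝ))) := by
    have hsup : ∀ y ∈ A, gg d ‖x - y‖ ≤ gg d (R/2) := by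
      intro y hy
      have h1 : ‖y‖ ≤ R/2 := mem_closedBall_zero_iff.1 hy
      have h2 : R/2 ≤ ‖x - y‖ := by
        have h3 := norm_sub_norm_le x y
        rw [← hRdef] at h3
        linarith
      exact gg_anti d hR2 h2
    have hstep1 : ∫ y in A, gg d ‖x - y‖ * gg d ‖y‖
        ≤ ∫ y in A, gg d (R/2) * gg d ‖y‖ := by
      apply setIntegral_mono_on hfprod_int.integrableOn
      · exact ((hfcont.continuousOn.integrableOn_compact (isCompact_closedBall _ _)).const_mul _)
      · exact hA
      · intro y hy
        exact mul_le_mul_of_nonneg_right (hsup y hy) (hfnn _ (norm_nonneg _))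
    have hstep2 : ∫ y in A, gg d (R/2) * gg d ‖y‖ = gg d (R/2) * ∫ y in A, gg d ‖y‖ :=
      integral_const_mul _ _
    have hstep3 : ∫ y in A, gg d ‖y‖ ≤ D * (2 * (LL (R/2)) ^ (1/2:ℝ)) := radial_near d hd hR2
    have hcancel : (LL (R/2)) ^ (-(1/2:ℝ)) * (LL (R/2)) ^ ((1/2:ℝ)) = 1 := by
      rw [← Real.rpow_add (LL_pos hR2)]
      norm_num
    have hstep4 : gg d (R/2) * (D * (2 * (LL (R/2)) ^ (1/2:ℝ)))
        = 2 * D * (1 + R/2) ^ (-(d:ℝ)) := by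
      have hexp : gg d (R/2) * (D * (2 * (LL (R/2)) ^ (1/2:ℝ)))
          = 2 * D * (1 + R/2) ^ (-(d:ℝ))
              * ((LL (R/2)) ^ (-(1/2:ℝ)) * (LL (R/2)) ^ ((1/2:ℝ))) := by
        unfold gg; ring
      rw [hexp, hcancel, mul_one]
    have hggnn : 0 ≤ gg d (R/2) := hfnn _ hR2
    calc ∫ y in A, gg d ‖x - y‖ * gg d ‖y‖
        ≤ gg d (R/2) * ∫ y in A, gg d ‖y‖ := by rw [← hstep2]; exact hstep1
      _ ≤ gg d (R/2) * (D * (2 * (LL (R/2)) ^ (1/2:ℝ))) :=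
          mul_le_mul_of_nonneg_left hstep3 hggnn
      _ = 2 * D * (1 + R/2) ^ (-(d:ℝ)) := hstep4
      _ ≤ 2 * D * ((2:ℝ)^(d:ℝ) * (1 + R) ^ (-(d:ℝ))) := by
          apply mul_le_mul_of_nonneg_left hhalf (by positivity)
  -- far bound
  have hfar : ∫ y in Aᶜ, (1 + ‖y‖) ^ (-(2*(d:ℝ)))
      ≤ D * ((2:ℝ)^(d:ℝ) * (1 + R) ^ (-(d:ℝ))) := by
    rw [hAc]
    calc ∫ y in {y : EuclideanSpace ℝ (Fin d) | R/2 < ‖y‖}, (1 + ‖y‖) ^ (-(2*(d:ℝ)))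
        ≤ D * (1 + R/2) ^ (-(d:ℝ)) := radial_far d hd hR2
      _ ≤ D * ((2:ℝ)^(d:ℝ) * (1 + R) ^ (-(d:ℝ))) :=
          mul_le_mul_of_nonneg_left hhalf hD.le
  -- near bound, transformed region
  have hcomm : (fun z : EuclideanSpace ℝ (Fin d) => gg d ‖z‖ * gg d ‖x - z‖)
      = (fun z => gg d ‖x - z‖ * gg d ‖z‖) := funext fun z => mul_comm _ _
  have hnear2 : ∫ y in Aᶜ ∩ B, gg d ‖x - y‖ * gg d ‖y‖
      ≤ 2 * D * ((2:ℝ)^(d:ℝ) * (1 + R) ^ (-(d:ℝ))) := by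
    have htrans := hT.setIntegral_preimage_emb hTemb
      (fun y => gg d ‖x - y‖ * gg d ‖y‖) (Aᶜ ∩ B)
    rw [← htrans]
    simp only [sub_sub_cancel]
    have hintA : IntegrableOn (fun z : EuclideanSpace ℝ (Fin d) => gg d ‖z‖ * gg d ‖x - z‖)
        A volume := by
      rw [hcomm]; exact hfprod_int.integrableOn
    calc ∫ z in (fun y : EuclideanSpace ℝ (Fin d) => x - y) ⁻¹' (Aᶜ ∩ B),
        gg d ‖z‖ * gg d ‖x - z‖
        ≤ ∫ z in A, gg d ‖z‖ * gg d ‖x - z‖ := by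
          apply setIntegral_mono_set hintA
            (ae_of_all _ fun z => mul_nonneg (hfnn _ (norm_nonneg _)) (hfnn _ (norm_nonneg _)))
            (HasSubset.Subset.eventuallyLE hTpre_sub)
      _ = ∫ z in A, gg d ‖x - z‖ * gg d ‖z‖ := by rw [hcomm]
      _ ≤ 2 * D * ((2:ℝ)^(d:ℝ) * (1 + R) ^ (-(d:ℝ))) := hnear
  -- far region bound
  have hfar2 : ∫ y in Aᶜ ∩ Bᶜ, gg d ‖x - y‖ * gg d ‖y‖
      ≤ 2 * (D * ((2:ℝ)^(d:ℝ) * (1 + R) ^ (-(d:ℝ)))) := by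
    have htransv := hT.setIntegral_preimage_emb hTemb
      (fun y => (1 + ‖x - y‖) ^ (-(2*(d:ℝ)))) Bᶜ
    rw [hTBc] at htransv
    simp only [sub_sub_cancel] at htransv
    calc ∫ y in Aᶜ ∩ Bᶜ, gg d ‖x - y‖ * gg d ‖y‖
        ≤ ∫ y in Aᶜ ∩ Bᶜ, ((1 + ‖y‖) ^ (-(2*(d:ℝ))) + (1 + ‖x - y‖) ^ (-(2*(d:ℝ)))) :=
          setIntegral_mono hfprod_int.integrableOn hw_int.integrableOn hprod_le_w
      _ = (∫ y in Aᶜ ∩ Bᶜ, (1 + ‖y‖) ^ (-(2*(d:ℝ))))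
            + ∫ y in Aᶜ ∩ Bᶜ, (1 + ‖x - y‖) ^ (-(2*(d:ℝ))) :=
          integral_add hv_int.integrableOn hvx_int.integrableOn
      _ ≤ (∫ y in Aᶜ, (1 + ‖y‖) ^ (-(2*(d:ℝ))))
            + ∫ y in Bᶜ, (1 + ‖x - y‖) ^ (-(2*(d:ℝ))) := by
          apply add_le_add
          · apply setIntegral_mono_set hv_int.integrableOn
              (ae_of_all _ fun y => by positivity)
              (HasSubset.Subset.eventuallyLE inter_subset_left)
          · apply setIntegral_mono_set hvx_int.integrableOn
              (ae_of_all _ fun y => by positivity)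
              (HasSubset.Subset.eventuallyLE inter_subset_right)
      _ = (∫ y in Aᶜ, (1 + ‖y‖) ^ (-(2*(d:ℝ))))
            + ∫ y in Aᶜ, (1 + ‖y‖) ^ (-(2*(d:ℝ))) := by rw [htransv]
      _ ≤ D * ((2:ℝ)^(d:ℝ) * (1 + R) ^ (-(d:ℝ)))
            + D * ((2:ℝ)^(d:ℝ) * (1 + R) ^ (-(d:ℝ))) := add_le_add hfar hfar
      _ = 2 * (D * ((2:ℝ)^(d:ℝ) * (1 + R) ^ (-(d:ℝ)))) := by ring
  -- assemble
  have hdisj : Disjoint (Aᶜ ∩ B) (Aᶜ ∩ Bᶜ) :=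
    Disjoint.mono inf_le_right inf_le_right disjoint_compl_right
  have hsplitc : ∫ y in Aᶜ, gg d ‖x - y‖ * gg d ‖y‖
      = (∫ y in Aᶜ ∩ B, gg d ‖x - y‖ * gg d ‖y‖)
          + ∫ y in Aᶜ ∩ Bᶜ, gg d ‖x - y‖ * gg d ‖y‖ := by
    have h0 := setIntegral_union (f := fun y : EuclideanSpace ℝ (Fin d) => gg d ‖x - y‖ * gg d ‖y‖)
      (μ := volume) hdisj (hA.compl.inter hB.compl)
      hfprod_int.integrableOn hfprod_int.integrableOn
    rw [Set.inter_union_compl] at h0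
    exact h0
  have hJ : ∫ y, gg d ‖x - y‖ * gg d ‖y‖
      ≤ 6 * (2:ℝ)^(d:ℝ) * D * (1 + R) ^ (-(d:ℝ)) := by
    rw [← integral_add_compl hA hfprod_int, hsplitc]
    have hXeq : 6 * (2:ℝ)^(d:ℝ) * D * (1 + R) ^ (-(d:ℝ))
        = 2 * D * ((2:ℝ)^(d:ℝ) * (1 + R) ^ (-(d:ℝ)))
          + (2 * D * ((2:ℝ)^(d:ℝ) * (1 + R) ^ (-(d:ℝ)))
            + 2 * (D * ((2:ℝ)^(d:ℝ) * (1 + R) ^ (-(d:ℝ))))) := by ring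
    rw [hXeq]
    exact add_le_add hnear (add_le_add hnear2 hfar2)
  calc |∫ y, m (x - y) * m y| ≤ ∫ y, |m (x - y) * m y| := by
        simpa only [Real.norm_eq_abs] using
          norm_integral_le_integral_norm (μ := volume)
            (fun y : EuclideanSpace ℝ (Fin d) => m (x - y) * m y)
    _ ≤ ∫ y, K^2 * (gg d ‖x - y‖ * gg d ‖y‖) :=
        integral_mono hmint.abs (hfprod_int.const_mul _) hmprod_le
    _ = K^2 * ∫ y, gg d ‖x - y‖ * gg d ‖y‖ := integral_const_mul _ _
    _ ≤ K^2 * (6 * (2:ℝ)^(d:ℝ) * D * (1 + R) ^ (-(d:ℝ))) :=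
        mul_le_mul_of_nonneg_left hJ (by positivity)
    _ = 6 * (2:ℝ)^(d:ℝ) * D * K^2 * (1 + R) ^ (-(d:ℝ)) := by ring
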